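/- Let x : ℝ → ℝ³ be C³ with |x'(t)| ≤ v₀ < 1 for all t and with x'' supported in [−T, T], so that x'(t) = v_in for t ≤ −T and x'(t) = v_out for t ≥ T, and suppose v_in ≠ v_out. Define K(p) = (1/i) ∫_ℝ [ (ψ_tt(p,t)/ψ_t(p,t)²) x'(t) − (1/ψ_t(p,t)) x''(t) ] e^{iψ(p,t)} dt for p ≠ 0. Then the transverse part of K is NOT square integrable: ∫_{ℝ³} |P(p)K(p)|² dp/(2|p|) = ∞. -/

import Mathlib

open MeasureTheory Complex

noncomputable section

abbrev E3 := EuclideanSpace ℝ (Fin 3)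
abbrev C3 := EuclideanSpace ℂ (Fin 3)

/-- The inclusion `ℝ³ → ℂ³`. -/
def cmap (v : E3) : C3 := WithLp.toLp 2 (fun i => (v i : ℂ))

/-- The phase `ψ(p,t) = |p| t − p·x(t)`. -/
def psi (x : ℝ → E3) (p : E3) (t : ℝ) : ℝ := ‖p‖ * t - (inner ℝ p (x t) : ℝ)

/-- `ψ_t(p,t) = |p| − p·x'(t)`. -/
def psit (x : ℝ → E3) (p : E3) (t : ℝ) : ℝ := ‖p‖ - (inner ℝ p (deriv x t) : ℝ)

/-- `ψ_tt(p,t) = −p·x''(t)`. -/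
def psitt (x : ℝ → E3) (p : E3) (t : ℝ) : ℝ := -(inner ℝ p (deriv (deriv x) t) : ℝ)

/-- `K(p) = (1/i) ∫ [ (ψ_tt/ψ_t²) x'(t) − (1/ψ_t) x''(t) ] e^{iψ(p,t)} dt`. -/
def Krad (x : ℝ → E3) (p : E3) : C3 :=
  (1 / Complex.I) •
    ∫ t : ℝ, Complex.exp (Complex.I * (psi x p t : ℂ)) •
      cmap ((psitt x p t / (psit x p t)^2) • deriv x t
            - (psit x p t)⁻¹ • deriv (deriv x) t)

/-- The transverse projection `P(p)v = v − (p·v/|p|²) p` on `ℂ³`. -/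
def transProjC (p : E3) (v : C3) : C3 :=
  v - ((∑ i, (p i : ℂ) * v i) / ((‖p‖^2 : ℝ) : ℂ)) • cmap p

namespace K
open scoped RealInnerProductSpace

lemma cmap_add (u v : E3) : cmap (u + v) = cmap u + cmap v := by
  ext i; simp [cmap]

lemma cmap_sub (u v : E3) : cmap (u - v) = cmap u - cmap v := by
  ext i; simp [cmap]

lemma cmap_smul (r : ℝ) (u : E3) : cmap (r • u) = (r : ℂ) • cmap u := by
  ext i; simp [cmap]

lemma cmap_zero : cmap (0 : E3) = 0 := by
  ext i; simp [cmap]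

lemma norm_cmap (u : E3) : ‖cmap u‖ = ‖u‖ := by
  rw [EuclideanSpace.norm_eq, EuclideanSpace.norm_eq]
  congr 1
  exact Finset.sum_congr rfl (by intro i _; simp [cmap])

lemma inner_cmap (p : E3) (v : C3) : (inner ℂ (cmap p) v : ℂ) = ∑ i, (p i : ℂ) * v i := by
  rw [PiLp.inner_apply]
  exact Finset.sum_congr rfl (by intro i _; simp [cmap, RCLike.inner_apply, Complex.conj_ofReal, mul_comm])

lemma transProjC_apply (p : E3) (v : C3) :
    transProjC p v = v - ((inner ℂ (cmap p) v : ℂ) / ((‖p‖^2 : ℝ) : ℂ)) • cmap p := by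
  rw [transProjC, inner_cmap]

lemma norm_transProjC_le (p : E3) (v : C3) : ‖transProjC p v‖ ≤ ‖v‖ := by
  rcases eq_or_ne p 0 with rfl | hp
  · simp [transProjC, cmap_zero]
  · rw [transProjC_apply]
    set q := cmap p with hq
    have hq0 : ‖q‖ = ‖p‖ := norm_cmap p
    have hqn : (0:ℝ) < ‖p‖ := norm_pos_iff.mpr hp
    set t : ℂ := (inner ℂ q v : ℂ) / ((‖p‖^2 : ℝ) : ℂ) with ht
    set s : ℝ := ‖(inner ℂ q v : ℂ)‖ with hs
    have hre : Complex.re (inner ℂ v (t • q) : ℂ) = s^2 / ‖p‖^2 := by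
      rw [inner_smul_right, ht, ← inner_conj_symm q v]
      rw [div_mul_eq_mul_div, Complex.conj_mul', ← Complex.ofReal_pow, ← Complex.ofReal_div,
        Complex.ofReal_re]
      rw [hs, ← inner_conj_symm q v, RCLike.norm_conj]
    have hnt : ‖t • q‖^2 = s^2 / ‖p‖^2 := by
      rw [norm_smul, mul_pow, ht, norm_div, hq0]
      simp [hs]
      field_simp
    have key : ‖v - t • q‖^2 = ‖v‖^2 - s^2 / ‖p‖^2 := by
      have h1 := @norm_sub_sq ℂ _ _ _ _ v (t • q)
      simp only [RCLike.re_to_complex] at h1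
      rw [hre, hnt] at h1
      rw [h1]; ring
    have hs2 : 0 ≤ s^2 / ‖p‖^2 := div_nonneg (sq_nonneg _) (sq_nonneg _)
    nlinarith [key, hs2, norm_nonneg v, norm_nonneg (v - t • q)]

def projR (p u : E3) : E3 := u - (((inner ℝ p u : ℝ)) / ‖p‖^2) • p

lemma transProjC_add (p : E3) (v w : C3) :
    transProjC p (v + w) = transProjC p v + transProjC p w := by
  simp only [transProjC_apply, inner_add_right, add_div, add_smul]
  abel

lemma transProjC_smul (p : E3) (z : ℂ) (v : C3) :
    transProjC p (z • v) = z • transProjC p v := by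
  simp only [transProjC_apply, inner_smul_right, mul_div_assoc, mul_smul, smul_sub]

lemma transProjC_sub (p : E3) (v w : C3) :
    transProjC p (v - w) = transProjC p v - transProjC p w := by
  simp only [transProjC_apply, inner_sub_right, sub_div, sub_smul]
  abel

lemma inner_cmap_cmap (p u : E3) : (inner ℂ (cmap p) (cmap u) : ℂ) = ((inner ℝ p u : ℝ) : ℂ) := by
  rw [inner_cmap, PiLp.inner_apply]
  push_cast
  exact Finset.sum_congr rfl (by intro i _; simp [cmap, RCLike.inner_apply, mul_comm])

lemma transProjC_cmap (p u : E3) : transProjC p (cmap u) = cmap (projR p u) := by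
  rw [transProjC_apply, projR, cmap_sub, cmap_smul, inner_cmap_cmap]
  norm_cast

lemma norm_transProjC_smul_cmap (p : E3) (z : ℂ) (u : E3) :
    ‖transProjC p (z • cmap u)‖ = ‖z‖ * ‖projR p u‖ := by
  rw [transProjC_smul, norm_smul, transProjC_cmap, norm_cmap]
end K
namespace K2
open scoped RealInnerProductSpace
open K

def cmapL : E3 →L[ℝ] C3 :=
  LinearMap.toContinuousLinearMap
    { toFun := cmap
      map_add' := cmap_add
      map_smul' := by
        intro r u
        ext i
        simp [cmap, Complex.real_smul] }

lemma cmapL_apply (u : E3) : cmapL u = cmap u := rfl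

variable {x : ℝ → E3}

lemma hasDerivAt_psi (hx : Differentiable ℝ x) (p : E3) (t : ℝ) :
    HasDerivAt (psi x p) (psit x p t) t := by
  have h1 : HasDerivAt (fun s : ℝ => ‖p‖ * s) ‖p‖ t := by
    simpa using (hasDerivAt_id t).const_mul ‖p‖
  have h2 : HasDerivAt (fun s => (inner ℝ p (x s) : ℝ)) (inner ℝ p (deriv x t) : ℝ) t := by
    simpa using HasDerivAt.inner ℝ (hasDerivAt_const t p) (hx t).hasDerivAt
  exact h1.sub h2

lemma hasDerivAt_psit (hx' : Differentiable ℝ (deriv x)) (p : E3) (t : ℝ) :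
    HasDerivAt (psit x p) (psitt x p t) t := by
  have h2 : HasDerivAt (fun s => (inner ℝ p (deriv x s) : ℝ))
      (inner ℝ p (deriv (deriv x) t) : ℝ) t := by
    simpa using HasDerivAt.inner ℝ (hasDerivAt_const t p) (hx' t).hasDerivAt
  exact ((hasDerivAt_const t ‖p‖).sub h2).congr_deriv (by simp [psitt])

end K2
namespace K3
open scoped RealInnerProductSpace
open K K2

lemma psit_ge {x : ℝ → E3} {v₀ : ℝ} (hbd : ∀ t, ‖deriv x t‖ ≤ v₀)
    (p : E3) (t : ℝ) : (1 - v₀) * ‖p‖ ≤ psit x p t := by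
  have h1 : (inner ℝ p (deriv x t) : ℝ) ≤ ‖p‖ * ‖deriv x t‖ := real_inner_le_norm p _
  have h2 : ‖p‖ * ‖deriv x t‖ ≤ ‖p‖ * v₀ :=
    mul_le_mul_of_nonneg_left (hbd t) (norm_nonneg p)
  have : psit x p t = ‖p‖ - (inner ℝ p (deriv x t) : ℝ) := rfl
  nlinarith [norm_nonneg p]

lemma psit_pos {x : ℝ → E3} {v₀ : ℝ} (hv₀ : v₀ < 1) (hbd : ∀ t, ‖deriv x t‖ ≤ v₀)
    {p : E3} (hp : p ≠ 0) (t : ℝ) : 0 < psit x p t :=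
  lt_of_lt_of_le (mul_pos (by linarith) (norm_pos_iff.mpr hp)) (psit_ge hbd p t)

lemma krad_decomp (x : ℝ → E3) (hx : ContDiff ℝ 3 x) (v₀ : ℝ) (hv₀ : v₀ < 1)
    (hbd : ∀ t, ‖deriv x t‖ ≤ v₀) (T : ℝ) (hT : 0 ≤ T)
    (hsupp : ∀ t : ℝ, t ∉ Set.Icc (-T) T → deriv (deriv x) t = 0)
    (p : E3) (hp : p ≠ 0) :
    Krad x p = (∫ t in (-T)..T, Complex.exp (Complex.I * (psi x p t : ℂ)) • cmap (deriv x t))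
      + (-Complex.I) •
          (Complex.exp (Complex.I * (psi x p (-T) : ℂ)) • cmap ((psit x p (-T))⁻¹ • deriv x (-T))
           - Complex.exp (Complex.I * (psi x p T : ℂ)) • cmap ((psit x p T)⁻¹ • deriv x T)) := by
  have hx1 : Differentiable ℝ x := hx.differentiable (by norm_num)
  have hx3 : ContDiff ℝ ((2 : WithTop ℕ∞) + 1) x := by
    have e : ((2 : WithTop ℕ∞) + 1) = 3 := by norm_num
    rw [e]; exact hx
  have hxd2 : ContDiff ℝ ((1 : WithTop ℕ∞) + 1) (deriv x) := by
    have h := (contDiff_succ_iff_deriv.mp hx3).2.2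
    have e : ((1 : WithTop ℕ∞) + 1) = 2 := by norm_num
    rw [e]; exact h
  have hx2 : Differentiable ℝ (deriv x) := hxd2.differentiable (by norm_num)
  have hx'c : Continuous (deriv x) := hx2.continuous
  have hx''c : Continuous (deriv (deriv x)) :=
    ((contDiff_succ_iff_deriv.mp hxd2).2.2).continuous
  have hpt : ∀ t, 0 < psit x p t := fun t => psit_pos hv₀ hbd hp t
  set c : ℝ → ℂ := fun t => Complex.exp (Complex.I * (psi x p t : ℂ)) with hcdef
  set q : ℝ → E3 := fun t => (psitt x p t / (psit x p t)^2) • deriv x t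
      - (psit x p t)⁻¹ • deriv (deriv x) t with hqdef
  set F : ℝ → C3 := fun t => c t • cmap ((psit x p t)⁻¹ • deriv x t) with hFdef
  have hF : ∀ t, HasDerivAt F ((Complex.I * c t) • cmap (deriv x t) - c t • cmap (q t)) t := by
    intro t
    have hψ := hasDerivAt_psi hx1 p t
    have hψt := hasDerivAt_psit hx2 p t
    have hcd : HasDerivAt c (c t * (Complex.I * (psit x p t : ℂ))) t :=
      (hψ.ofReal_comp.const_mul Complex.I).cexp
    have hmd : HasDerivAt (fun s => (psit x p s)⁻¹ • deriv x s)
        ((psit x p t)⁻¹ • deriv (deriv x) t + (-(psitt x p t) / (psit x p t)^2) • deriv x t) t :=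
      HasDerivAt.smul (hψt.inv (ne_of_gt (hpt t))) (hx2 t).hasDerivAt
    have hmd' : HasDerivAt (fun s => cmap ((psit x p s)⁻¹ • deriv x s))
        (cmap ((psit x p t)⁻¹ • deriv (deriv x) t + (-(psitt x p t) / (psit x p t)^2) • deriv x t))
        t := by
      simpa only [cmapL_apply, Function.comp_def] using cmapL.hasFDerivAt.comp_hasDerivAt t hmd
    have hs := hcd.smul hmd'
    refine hs.congr_deriv ?_
    have hne : ((psit x p t : ℝ) : ℂ) ≠ 0 := Complex.ofReal_ne_zero.mpr (ne_of_gt (hpt t))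
    simp only [hqdef, cmap_add, cmap_sub, cmap_smul, smul_smul]
    push_cast
    match_scalars
    all_goals field_simp
    all_goals ring
  have hψc : Continuous (psi x p) :=
    (continuous_const.mul continuous_id).sub (Continuous.inner continuous_const hx1.continuous)
  have hψtc : Continuous (psit x p) :=
    continuous_const.sub (Continuous.inner continuous_const hx'c)
  have hψttc : Continuous (psitt x p) := (Continuous.inner continuous_const hx''c).neg
  have hcc : Continuous c :=
    Complex.continuous_exp.comp (continuous_const.mul (Complex.continuous_ofReal.comp hψc))
  have hcmc : Continuous (fun u : E3 => cmap u) := cmapL.continuous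
  have hqc : Continuous q :=
    ((hψttc.div (hψtc.pow 2) (fun t => pow_ne_zero 2 (ne_of_gt (hpt t)))).smul hx'c).sub
      ((hψtc.inv₀ fun t => ne_of_gt (hpt t)).smul hx''c)
  have hgc : Continuous (fun t => c t • cmap (q t)) := hcc.smul (hcmc.comp hqc)
  have hAc : Continuous (fun t => (Complex.I * c t) • cmap (deriv x t)) :=
    (continuous_const.mul hcc).smul (hcmc.comp hx'c)
  have hGc : Continuous (fun t => (Complex.I * c t) • cmap (deriv x t) - c t • cmap (q t)) :=
    hAc.sub hgc
  have hzero : ∀ t, t ∉ Set.Icc (-T) T → c t • cmap (q t) = 0 := by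
    intro t ht
    have h2 : deriv (deriv x) t = 0 := hsupp t ht
    have h3 : psitt x p t = 0 := by simp [psitt, h2]
    simp [hqdef, h2, h3, cmap_zero]
  have hI1 : (∫ t : ℝ, c t • cmap (q t)) = ∫ t in (-T)..T, c t • cmap (q t) := by
    rw [← setIntegral_eq_integral_of_forall_compl_eq_zero hzero,
      integral_Icc_eq_integral_Ioc, intervalIntegral.integral_of_le (by linarith : -T ≤ T)]
  have hFTC : (∫ t in (-T)..T, ((Complex.I * c t) • cmap (deriv x t) - c t • cmap (q t)))
      = F T - F (-T) :=
    intervalIntegral.integral_eq_sub_of_hasDerivAt (fun t _ => hF t) (hGc.intervalIntegrable _ _)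
  have hsub : (∫ t in (-T)..T, c t • cmap (q t))
      = (∫ t in (-T)..T, (Complex.I * c t) • cmap (deriv x t)) - (F T - F (-T)) := by
    rw [← hFTC, ← intervalIntegral.integral_sub (hAc.intervalIntegrable _ _)
      (hGc.intervalIntegrable _ _)]
    congr 1
    funext t
    abel
  have hKrad : Krad x p = (1/Complex.I) • ∫ t : ℝ, c t • cmap (q t) := rfl
  rw [hKrad, hI1, hsub]
  have hpull : (∫ t in (-T)..T, (Complex.I * c t) • cmap (deriv x t))
      = Complex.I • ∫ t in (-T)..T, c t • cmap (deriv x t) := by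
    rw [← intervalIntegral.integral_smul]
    congr 1
    funext t
    rw [smul_smul]
  rw [hpull, smul_sub, smul_smul]
  have h1I : (1/Complex.I) * Complex.I = 1 := by
    rw [one_div, inv_mul_cancel₀ Complex.I_ne_zero]
  rw [h1I, one_smul, one_div, Complex.inv_I]
  simp only [hFdef, hcdef]
  module

end K3
namespace K4
open scoped RealInnerProductSpace
open K K2 K3

lemma norm_exp_I_mul_real (r : ℝ) : ‖Complex.exp (Complex.I * (r:ℂ))‖ = 1 := by
  rw [mul_comm]
  exact Complex.norm_exp_ofReal_mul_I r

def av (w p : E3) : ℝ := ‖p‖ - (inner ℝ p w : ℝ)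
def Gv (vin vout p : E3) : E3 := (av vin p)⁻¹ • vin - (av vout p)⁻¹ • vout
def Nf (vin vout p : E3) : ℝ := ‖p‖ * ‖projR p (Gv vin vout p)‖

lemma krad_lower
    (x : ℝ → E3) (hx : ContDiff ℝ 3 x)
    (v₀ : ℝ) (hv₀ : v₀ < 1) (hbd : ∀ t, ‖deriv x t‖ ≤ v₀)
    (T : ℝ) (hT : 0 ≤ T)
    (hsupp : ∀ t : ℝ, t ∉ Set.Icc (-T) T → deriv (deriv x) t = 0)
    (vin vout : E3)
    (hin : deriv x (-T) = vin) (hout : deriv x T = vout)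
    (p : E3) (hp : p ≠ 0) (hM : (2*T + ‖x T - x (-T)‖) * ‖p‖ ≤ 1) :
    Nf vin vout p / ‖p‖ - (2*T*v₀ + 2*(2*T + ‖x T - x (-T)‖)*v₀/(1-v₀))
      ≤ ‖transProjC p (Krad x p)‖ := by
  set M := 2*T + ‖x T - x (-T)‖ with hMdef
  have hM0 : 0 ≤ M := by rw [hMdef]; positivity
  clear_value M
  have hnp : 0 < ‖p‖ := norm_pos_iff.mpr hp
  have hv0 : 0 ≤ v₀ := le_trans (norm_nonneg _) (hbd 0)
  have hvin : ‖vin‖ ≤ v₀ := hin ▸ hbd (-T)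
  have hvout : ‖vout‖ ≤ v₀ := hout ▸ hbd T
  have ha : psit x p (-T) = av vin p := by rw [psit, av, hin]
  have hb : psit x p T = av vout p := by rw [psit, av, hout]
  have hage : (1-v₀)*‖p‖ ≤ av vin p := ha ▸ psit_ge hbd p (-T)
  have hbge : (1-v₀)*‖p‖ ≤ av vout p := hb ▸ psit_ge hbd p T
  have hapos : 0 < av vin p := lt_of_lt_of_le (by nlinarith) hage
  have hbpos : 0 < av vout p := lt_of_lt_of_le (by nlinarith) hbge
  have hK := krad_decomp x hx v₀ hv₀ hbd T hT hsupp p hp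
  rw [ha, hb, hin, hout] at hK
  set Em : ℂ := Complex.exp (Complex.I * ((psi x p (-T) : ℝ):ℂ)) with hEm
  set Ep : ℂ := Complex.exp (Complex.I * ((psi x p T : ℝ):ℂ)) with hEp
  set Cterm : C3 := ∫ t in (-T)..T, Complex.exp (Complex.I * ((psi x p t : ℝ):ℂ)) • cmap (deriv x t)
    with hCdef
  clear_value Em Ep Cterm
  have hsplit : (-Complex.I) • (Em • cmap ((av vin p)⁻¹ • vin) - Ep • cmap ((av vout p)⁻¹ • vout))
      = (-Complex.I * Em) • cmap (Gv vin vout p)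
        + (-Complex.I * (Em - Ep)) • cmap ((av vout p)⁻¹ • vout) := by
    rw [Gv, cmap_sub]
    module
  rw [hsplit] at hK
  have hPK : transProjC p (Krad x p)
      = transProjC p Cterm + (-Complex.I * Em) • transProjC p (cmap (Gv vin vout p))
        + (-Complex.I * (Em - Ep)) • transProjC p (cmap ((av vout p)⁻¹ • vout)) := by
    rw [hK, transProjC_add, transProjC_add, transProjC_smul, transProjC_smul]
    abel
  have hunit : ‖-Complex.I * Em‖ = 1 := by
    rw [norm_mul, norm_neg, Complex.norm_I, one_mul, hEm, norm_exp_I_mul_real]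
  have hmain : ‖(-Complex.I * Em) • transProjC p (cmap (Gv vin vout p))‖
      = Nf vin vout p / ‖p‖ := by
    rw [norm_smul, hunit, one_mul, transProjC_cmap, norm_cmap, Nf]
    field_simp
  have hC : ‖transProjC p Cterm‖ ≤ 2*T*v₀ := by
    refine le_trans (norm_transProjC_le _ _) ?_
    have hble : ∀ t ∈ Set.uIoc (-T) T,
        ‖Complex.exp (Complex.I * ((psi x p t : ℝ):ℂ)) • cmap (deriv x t)‖ ≤ v₀ := by
      intro t _
      rw [norm_smul, norm_exp_I_mul_real, one_mul, norm_cmap]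
      exact hbd t
    have := intervalIntegral.norm_integral_le_of_norm_le_const hble
    rw [hCdef]
    refine le_trans this (le_of_eq ?_)
    rw [_root_.abs_of_nonneg (by linarith : (0:ℝ) ≤ T - -T)]
    ring
  have hδ : |psi x p (-T) - psi x p T| ≤ M * ‖p‖ := by
    have h1 : psi x p (-T) - psi x p T = -(2*T*‖p‖) + (inner ℝ p (x T - x (-T)) : ℝ) := by
      rw [psi, psi, inner_sub_right]; ring
    have h2 := abs_add_le (-(2*T*‖p‖)) ((inner ℝ p (x T - x (-T)) : ℝ))
    have h3 : |(inner ℝ p (x T - x (-T)) : ℝ)| ≤ ‖p‖ * ‖x T - x (-T)‖ := abs_real_inner_le_norm p _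
    have h5 : |(-(2*T*‖p‖))| = 2*T*‖p‖ := by
      rw [abs_neg]; exact _root_.abs_of_nonneg (by positivity)
    rw [h1, hMdef]
    nlinarith
  have hEd : ‖Em - Ep‖ ≤ 2 * (M * ‖p‖) := by
    have harg : Complex.I * ((psi x p (-T):ℝ):ℂ)
        = Complex.I * ((psi x p T:ℝ):ℂ) + Complex.I * ((psi x p (-T) - psi x p T : ℝ) : ℂ) := by
      push_cast; ring
    have hfac : Em - Ep
        = Ep * (Complex.exp (Complex.I * ((psi x p (-T) - psi x p T : ℝ) : ℂ)) - 1) := by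
      rw [hEm, hEp, harg, Complex.exp_add, mul_sub, mul_one]
    have h1 : ‖Complex.I * ((psi x p (-T) - psi x p T : ℝ) : ℂ)‖ ≤ 1 := by
      rw [norm_mul, Complex.norm_I, one_mul, Complex.norm_real, Real.norm_eq_abs]
      linarith [hδ, hM]
    have h2 := Complex.norm_exp_sub_one_le h1
    rw [norm_mul, Complex.norm_I, one_mul, Complex.norm_real, Real.norm_eq_abs] at h2
    rw [hfac, norm_mul, hEp, norm_exp_I_mul_real, one_mul]
    linarith [hδ, h2]
  have hBnorm : ‖(-Complex.I * (Em - Ep)) • transProjC p (cmap ((av vout p)⁻¹ • vout))‖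
      ≤ 2*M*v₀/(1-v₀) := by
    rw [norm_smul, norm_mul, norm_neg, Complex.norm_I, one_mul]
    have h1 : ‖transProjC p (cmap ((av vout p)⁻¹ • vout))‖ ≤ (av vout p)⁻¹ * ‖vout‖ := by
      refine le_trans (norm_transProjC_le _ _) ?_
      rw [norm_cmap, norm_smul, Real.norm_eq_abs, abs_of_pos (inv_pos.mpr hbpos)]
    have h2 : (av vout p)⁻¹ ≤ ((1-v₀)*‖p‖)⁻¹ :=
      inv_anti₀ (mul_pos (by linarith) hnp) hbge
    calc ‖Em - Ep‖ * ‖transProjC p (cmap ((av vout p)⁻¹ • vout))‖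
        ≤ (2 * (M * ‖p‖)) * (((1-v₀)*‖p‖)⁻¹ * v₀) := by
          refine mul_le_mul hEd (le_trans h1 ?_) (norm_nonneg _)
            (mul_nonneg (by norm_num) (mul_nonneg hM0 (norm_nonneg p)))
          exact mul_le_mul h2 hvout (norm_nonneg _)
            (inv_nonneg.mpr (le_of_lt (mul_pos (by linarith) hnp)))
      _ = 2*M*v₀/(1-v₀) := by
          have h10 : (1-v₀) ≠ 0 := by linarith
          have h11 : ‖p‖ ≠ 0 := ne_of_gt hnp
          rw [mul_inv]
          field_simp
  have htri : ‖(-Complex.I * Em) • transProjC p (cmap (Gv vin vout p))‖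
      ≤ ‖transProjC p (Krad x p)‖ + ‖transProjC p Cterm‖
        + ‖(-Complex.I * (Em - Ep)) • transProjC p (cmap ((av vout p)⁻¹ • vout))‖ := by
    have h4 : (-Complex.I * Em) • transProjC p (cmap (Gv vin vout p))
        = transProjC p (Krad x p) - transProjC p Cterm
          - (-Complex.I * (Em - Ep)) • transProjC p (cmap ((av vout p)⁻¹ • vout)) := by
      rw [hPK]; abel
    rw [h4]
    exact le_trans (norm_sub_le _ _) (add_le_add (norm_sub_le _ _) le_rfl)
  rw [hmain] at htri
  linarith

end K4
namespace K5
open scoped RealInnerProductSpace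
open K K2 K3 K4

lemma av_ge {w : E3} {v₀ : ℝ} (hw : ‖w‖ ≤ v₀) (p : E3) : (1 - v₀) * ‖p‖ ≤ av w p := by
  have h1 : (inner ℝ p w : ℝ) ≤ ‖p‖ * ‖w‖ := real_inner_le_norm p w
  have h2 : ‖p‖ * ‖w‖ ≤ ‖p‖ * v₀ := mul_le_mul_of_nonneg_left hw (norm_nonneg p)
  rw [av]; nlinarith [norm_nonneg p]

lemma av_pos {w : E3} {v₀ : ℝ} (hv₀ : v₀ < 1) (hw : ‖w‖ ≤ v₀) {p : E3} (hp : p ≠ 0) :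
    0 < av w p :=
  lt_of_lt_of_le (mul_pos (by linarith) (norm_pos_iff.mpr hp)) (av_ge hw p)

lemma av_smul (w p : E3) {r : ℝ} (hr : 0 < r) : av w (r • p) = r * av w p := by
  rw [av, av, norm_smul, real_inner_smul_left, Real.norm_eq_abs, _root_.abs_of_pos hr]
  ring

lemma projR_smul_left (p u : E3) {r : ℝ} (hr : r ≠ 0) : projR (r • p) u = projR p u := by
  rw [projR, projR, norm_smul, real_inner_smul_left, smul_smul]
  congr 1
  have h1 : (r * (inner ℝ p u : ℝ)) / ((‖(r:ℝ)‖ * ‖p‖)^2) * r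
      = (r^2 * (inner ℝ p u : ℝ)) / (r^2 * ‖p‖^2) := by
    rw [Real.norm_eq_abs, mul_pow, _root_.sq_abs]
    ring
  rw [h1, mul_div_mul_left _ _ (pow_ne_zero 2 hr)]

lemma projR_smul_right (p u : E3) (s : ℝ) : projR p (s • u) = s • projR p u := by
  rw [projR, projR, real_inner_smul_right, smul_sub, smul_smul]
  congr 2
  ring

lemma Gv_smul (vin vout p : E3) {r : ℝ} (hr : 0 < r) :
    Gv vin vout (r • p) = r⁻¹ • Gv vin vout p := by
  rw [Gv, Gv, av_smul _ _ hr, av_smul _ _ hr, mul_inv, mul_inv, smul_sub, smul_smul, smul_smul]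

lemma Nf_smul (vin vout p : E3) {r : ℝ} (hr : 0 < r) :
    Nf vin vout (r • p) = Nf vin vout p := by
  rw [Nf, Nf, norm_smul, Gv_smul _ _ _ hr, projR_smul_left _ _ (ne_of_gt hr),
    projR_smul_right, norm_smul]
  rw [Real.norm_eq_abs, Real.norm_eq_abs, _root_.abs_of_pos hr, abs_inv, _root_.abs_of_pos hr]
  field_simp

lemma exists_unit_perp (d : E3) (hd : d ≠ 0) : ∃ e : E3, ‖e‖ = 1 ∧ (inner ℝ e d : ℝ) = 0 := by
  have hne : ((ℝ ∙ d)ᗮ : Submodule ℝ E3) ≠ ⊥ := by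
    intro hbot
    have htop : (ℝ ∙ d : Submodule ℝ E3) = ⊤ := Submodule.orthogonal_eq_bot_iff.mp hbot
    have h1 : Module.finrank ℝ (ℝ ∙ d : Submodule ℝ E3) = 1 := finrank_span_singleton hd
    rw [htop] at h1
    rw [finrank_top] at h1
    have : Module.finrank ℝ E3 = 3 := finrank_euclideanSpace_fin
    omega
  obtain ⟨y, hy_mem, hy0⟩ := Submodule.exists_mem_ne_zero_of_ne_bot hne
  have hyn : 0 < ‖y‖ := norm_pos_iff.mpr hy0
  refine ⟨‖y‖⁻¹ • y, ?_, ?_⟩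
  · rw [norm_smul, Real.norm_eq_abs, abs_inv, abs_norm, inv_mul_cancel₀ (ne_of_gt hyn)]
  · rw [real_inner_smul_left]
    have : (inner ℝ d y : ℝ) = 0 :=
      (Submodule.mem_orthogonal _ _).mp hy_mem d (Submodule.mem_span_singleton_self d)
    rw [real_inner_comm, this, mul_zero]

lemma Nf_pos_at {vin vout : E3} {v₀ : ℝ} (hv₀ : v₀ < 1) (hvin : ‖vin‖ ≤ v₀)
    (hvout : ‖vout‖ ≤ v₀) (hne : vin ≠ vout) :
    ∃ e : E3, ‖e‖ = 1 ∧ 0 < Nf vin vout e := by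
  have hd : vin - vout ≠ 0 := sub_ne_zero.mpr hne
  obtain ⟨e, he1, heperp⟩ := exists_unit_perp (vin - vout) hd
  refine ⟨e, he1, ?_⟩
  set s : ℝ := (inner ℝ e vin : ℝ) with hsdef
  have hs2 : (inner ℝ e vout : ℝ) = s := by
    have := heperp
    rw [inner_sub_right] at this
    linarith
  have havin : av vin e = 1 - s := by rw [av, he1, ← hsdef]
  have havout : av vout e = 1 - s := by rw [av, he1, hs2]
  have hsle : |s| ≤ v₀ := by
    have := abs_real_inner_le_norm e vin
    rw [he1, one_mul] at this
    exact le_trans this hvin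
  have hspos : 0 < 1 - s := by
    have := abs_le.mp hsle
    linarith
  have hGv : Gv vin vout e = (1-s)⁻¹ • (vin - vout) := by
    rw [Gv, havin, havout, smul_sub]
  have hperp2 : (inner ℝ e (Gv vin vout e) : ℝ) = 0 := by
    rw [hGv, real_inner_smul_right, heperp, mul_zero]
  have hproj : projR e (Gv vin vout e) = Gv vin vout e := by
    rw [projR, hperp2]
    simp
  rw [Nf, hproj, he1, one_mul, hGv, norm_smul]
  have : ‖(1-s)⁻¹‖ > 0 := by
    rw [Real.norm_eq_abs, abs_inv, _root_.abs_of_pos hspos]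
    positivity
  have hdn : 0 < ‖vin - vout‖ := norm_pos_iff.mpr hd
  positivity

lemma Nf_continuousOn (vin vout : E3) {v₀ : ℝ} (hv₀ : v₀ < 1) (hvin : ‖vin‖ ≤ v₀)
    (hvout : ‖vout‖ ≤ v₀) :
    ContinuousOn (Nf vin vout) {p : E3 | p ≠ 0} := by
  set S : Set E3 := {p : E3 | p ≠ 0} with hSdef
  have havc : ∀ w : E3, Continuous (fun p => av w p) := by
    intro w
    exact continuous_norm.sub (Continuous.inner continuous_id continuous_const)
  have havne : ∀ w : E3, ‖w‖ ≤ v₀ → ∀ p ∈ S, av w p ≠ 0 := by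
    intro w hw p hp
    exact ne_of_gt (av_pos hv₀ hw hp)
  have hGvc : ContinuousOn (fun p => Gv vin vout p) S := by
    apply ContinuousOn.sub
    · exact (((havc vin).continuousOn.inv₀ (havne vin hvin)).smul continuousOn_const)
    · exact (((havc vout).continuousOn.inv₀ (havne vout hvout)).smul continuousOn_const)
  have hinnc : ContinuousOn (fun p => (inner ℝ p (Gv vin vout p) : ℝ)) S :=
    ContinuousOn.inner (continuous_id.continuousOn) hGvc
  have hprojc : ContinuousOn (fun p => projR p (Gv vin vout p)) S := by
    apply ContinuousOn.sub hGvc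
    refine ContinuousOn.smul (f := fun p => (inner ℝ p (Gv vin vout p) : ℝ) / ‖p‖^2) (g := fun p => p) ?_ ?_
    · exact hinnc.div ((continuous_norm.pow 2).continuousOn)
        (fun p hp => pow_ne_zero 2 (norm_ne_zero_iff.mpr hp))
    · exact continuous_id.continuousOn
  exact (continuous_norm.continuousOn).mul hprojc.norm

end K5


open Pointwise

open K K2 K3 K4 K5 in
set_option maxHeartbeats 2000000 in
/-- if `x''` is supported in `[−T,T]` and the asymptotic velocities differ
(`x' = v_in` for `t ≤ −T`, `x' = v_out` for `t ≥ T`, `v_in ≠ v_out`), then the transverse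
part of `K` is not square integrable for `dp/(2|p|)`. -/
theorem Krad_not_sq_integrable_of_different_velocity
    (x : ℝ → E3) (hx : ContDiff ℝ 3 x)
    (v₀ : ℝ) (hv₀ : v₀ < 1) (hbd : ∀ t, ‖deriv x t‖ ≤ v₀)
    (T : ℝ) (hsupp : Function.support (deriv (deriv x)) ⊆ Set.Icc (-T) T)
    (vin vout : E3) (hne : vin ≠ vout)
    (hin : ∀ t : ℝ, t ≤ -T → deriv x t = vin)
    (hout : ∀ t : ℝ, T ≤ t → deriv x t = vout) :
    ∫⁻ p : E3, ENNReal.ofReal (‖transProjC p (Krad x p)‖^2 / (2 * ‖p‖)) = ⊤ := by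
  classical
  have hsupp' : ∀ t, t ∉ Set.Icc (-T) T → deriv (deriv x) t = 0 := by
    intro t ht
    by_contra h
    exact ht (hsupp h)
  have hT : 0 < T := by
    by_contra h
    push_neg at h
    have h1 : deriv x T = vin := hin T (by linarith)
    have h2 : deriv x T = vout := hout T le_rfl
    exact hne (h1.symm.trans h2)
  have hvinn : ‖vin‖ ≤ v₀ := hin (-T) le_rfl ▸ hbd (-T)
  have hvoutn : ‖vout‖ ≤ v₀ := hout T le_rfl ▸ hbd T
  have hv00 : 0 ≤ v₀ := le_trans (norm_nonneg _) (hbd 0)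
  set M : ℝ := 2*T + ‖x T - x (-T)‖ with hMdef
  have hM0 : 0 ≤ M := by rw [hMdef]; positivity
  set C₀ : ℝ := 2*T*v₀ + 2*M*v₀/(1-v₀) + 1 with hC₀def
  have hC₀ : 0 < C₀ := by
    have h1 : 0 ≤ 2*M*v₀/(1-v₀) := div_nonneg (by positivity) (by linarith)
    have h2 : 0 ≤ 2*T*v₀ := by positivity
    rw [hC₀def]; linarith
  clear_value M C₀
  obtain ⟨e, he1, heN⟩ := Nf_pos_at hv₀ hvinn hvoutn hne
  set c : ℝ := Nf vin vout e / 2 with hcdef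
  have hc : 0 < c := by rw [hcdef]; linarith
  clear_value c
  set A : Set E3 := {p : E3 | p ≠ 0 ∧ c < Nf vin vout p} with hAdef
  have hAopen : IsOpen A := by
    have h1 : IsOpen ({p : E3 | p ≠ 0} ∩ (Nf vin vout) ⁻¹' Set.Ioi c) :=
      (Nf_continuousOn vin vout hv₀ hvinn hvoutn).isOpen_inter_preimage isOpen_ne isOpen_Ioi
    have h2 : A = {p : E3 | p ≠ 0} ∩ (Nf vin vout) ⁻¹' Set.Ioi c := by
      rw [hAdef]
      ext p
      simp [Set.mem_setOf_eq]
    rw [h2]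
    exact h1
  have heA : e ∈ A := by
    refine ⟨?_, by rw [hcdef]; linarith⟩
    intro h0
    rw [h0] at he1
    simp at he1
  have hAsm : ∀ (r : ℝ), 0 < r → ∀ p ∈ A, r • p ∈ A := by
    rintro r hr p ⟨hp0, hpc⟩
    exact ⟨smul_ne_zero (ne_of_gt hr) hp0, by rw [Nf_smul _ _ _ hr]; exact hpc⟩
  set r₀ : ℝ := min (c/(2*C₀)) (1/(M+1)) with hr₀def
  have hr₀ : 0 < r₀ := lt_min (by positivity) (by positivity)
  -- pointwise lower bound
  have hpt : ∀ p : E3, p ∈ A → ‖p‖ < r₀ → c/(2*‖p‖) ≤ ‖transProjC p (Krad x p)‖ := by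
    rintro p ⟨hp0, hpc⟩ hpr
    have hnp : 0 < ‖p‖ := norm_pos_iff.mpr hp0
    have hMp : (2*T + ‖x T - x (-T)‖)*‖p‖ ≤ 1 := by
      rw [← hMdef]
      have h1 : ‖p‖ < 1/(M+1) := lt_of_lt_of_le hpr (by rw [hr₀def]; exact min_le_right _ _)
      rw [lt_div_iff₀ (by positivity)] at h1
      nlinarith [norm_nonneg p]
    have hKlow := krad_lower x hx v₀ hv₀ hbd T (le_of_lt hT) hsupp' vin vout
      (hin (-T) le_rfl) (hout T le_rfl) p hp0 hMp
    rw [← hMdef] at hKlow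
    have h2 : c/‖p‖ ≤ Nf vin vout p/‖p‖ := by gcongr
    have h4 : C₀ ≤ c/(2*‖p‖) := by
      have h5 : ‖p‖ < c/(2*C₀) := lt_of_lt_of_le hpr (by rw [hr₀def]; exact min_le_left _ _)
      rw [le_div_iff₀ (by positivity)]
      rw [lt_div_iff₀ (by positivity)] at h5
      nlinarith
    have h6 : c/(2*‖p‖) = c/‖p‖ - c/(2*‖p‖) := by
      field_simp
      ring
    have h3 : 2*T*v₀ + 2*M*v₀/(1-v₀) = C₀ - 1 := by rw [hC₀def]; ring
    rw [h3] at hKlow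
    linarith
  -- shells
  set S0 : Set E3 := A ∩ {p : E3 | r₀/2 < ‖p‖ ∧ ‖p‖ < r₀} with hS0def
  have hS0open : IsOpen S0 :=
    hAopen.inter ((isOpen_lt continuous_const continuous_norm).inter
      (isOpen_lt continuous_norm continuous_const))
  have hS0ne : S0.Nonempty := by
    refine ⟨(3*r₀/4) • e, hAsm _ (by positivity) e heA, ?_, ?_⟩
    · rw [norm_smul, Real.norm_eq_abs, _root_.abs_of_pos (by positivity), he1]
      nlinarith
    · rw [norm_smul, Real.norm_eq_abs, _root_.abs_of_pos (by positivity), he1]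
      nlinarith
  have hS0pos : 0 < volume S0 := hS0open.measure_pos volume hS0ne
  set Sk : ℕ → Set E3 := fun k =>
    A ∩ {p : E3 | r₀/2 * (1/2)^k < ‖p‖ ∧ ‖p‖ < r₀ * (1/2)^k} with hSkdef
  have hSkopen : ∀ k, IsOpen (Sk k) := fun k =>
    hAopen.inter ((isOpen_lt continuous_const continuous_norm).inter
      (isOpen_lt continuous_norm continuous_const))
  have hSkmeas : ∀ k, MeasurableSet (Sk k) := fun k => (hSkopen k).measurableSet
  have hSk_eq : ∀ k : ℕ, Sk k = ((1/2:ℝ)^k) • S0 := by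
    intro k
    have hσ : (0:ℝ) < (1/2:ℝ)^k := by positivity
    ext p
    rw [Set.mem_smul_set_iff_inv_smul_mem₀ (ne_of_gt hσ)]
    have hnrm : ‖(((1/2:ℝ)^k)⁻¹ : ℝ) • p‖ = ((1/2:ℝ)^k)⁻¹ * ‖p‖ := by
      rw [norm_smul, Real.norm_eq_abs, abs_inv, _root_.abs_of_pos hσ]
    constructor
    · rintro ⟨hpA, h1, h2⟩
      refine ⟨hAsm _ (by positivity) p hpA, ?_, ?_⟩
      · rw [hnrm, inv_mul_eq_div, lt_div_iff₀ hσ]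
        exact h1
      · rw [hnrm, inv_mul_eq_div, div_lt_iff₀ hσ]
        exact h2
    · rintro ⟨hpA', h1, h2⟩
      rw [hnrm, inv_mul_eq_div, lt_div_iff₀ hσ] at h1
      rw [hnrm, inv_mul_eq_div, div_lt_iff₀ hσ] at h2
      have hback := hAsm _ hσ _ hpA'
      rw [smul_inv_smul₀ (ne_of_gt hσ)] at hback
      exact ⟨hback, h1, h2⟩
  have hSkvol : ∀ k, volume (Sk k) = ENNReal.ofReal ((1/8:ℝ)^k) * volume S0 := by
    intro k
    rw [hSk_eq k, Measure.addHaar_smul_of_nonneg volume (by positivity : (0:ℝ) ≤ (1/2:ℝ)^k)]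
    congr 1
    rw [finrank_euclideanSpace_fin]
    rw [← pow_mul, show k*3 = 3*k by ring, pow_mul]
    norm_num
  have hSkdisj : Pairwise (Function.onFun Disjoint Sk) := by
    apply (pairwise_disjoint_on Sk).mpr
    intro m n hmn
    rw [Set.disjoint_left]
    rintro p ⟨_, hm1, _⟩ ⟨_, _, hn2⟩
    -- wrong order? p ∈ Sk m : r₀/2*(1/2)^m < ‖p‖ ; p ∈ Sk n : ‖p‖ < r₀*(1/2)^n
    have hpow : (1/2:ℝ)^n ≤ (1/2)^(m+1) :=
      pow_le_pow_of_le_one (by norm_num) (by norm_num) (by omega)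
    have hps : (1/2:ℝ)^(m+1) = (1/2)^m * (1/2) := pow_succ _ _
    nlinarith [hr₀, pow_pos (show (0:ℝ) < 1/2 by norm_num) m]
  -- lower bound each shell integral
  set f : E3 → ENNReal :=
    fun p => ENNReal.ofReal (‖transProjC p (Krad x p)‖^2 / (2 * ‖p‖)) with hfdef
  have hσle1 : ∀ k : ℕ, ((1:ℝ)/2)^k ≤ 1 := by
    intro k
    apply pow_le_one₀ <;> norm_num
  have hbound : ∀ k : ℕ,
      ENNReal.ofReal (c^2/(8*r₀^3)) * volume S0 ≤ ∫⁻ p in Sk k, f p := by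
    intro k
    have hp8 : (0:ℝ) < (8:ℝ)^k := by positivity
    have hlow : ∀ p ∈ Sk k, ENNReal.ofReal (c^2/(8*r₀^3)*(8:ℝ)^k) ≤ f p := by
      rintro p ⟨hpA, h1, h2⟩
      apply ENNReal.ofReal_le_ofReal
      have hnp : 0 < ‖p‖ := lt_trans (by positivity) h1
      have hplt : ‖p‖ < r₀ := lt_of_lt_of_le h2 (by
        have := mul_le_mul_of_nonneg_left (hσle1 k) (le_of_lt hr₀)
        linarith)
      have hlb := hpt p hpA hplt
      have h6 : (c/(2*‖p‖))^2 ≤ ‖transProjC p (Krad x p)‖^2 := by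
        have h0 : 0 ≤ c/(2*‖p‖) := div_nonneg (le_of_lt hc) (by positivity)
        nlinarith [hlb, h0]
      have h7 : (c/(2*‖p‖))^2/(2*‖p‖) = c^2/(8*‖p‖^3) := by
        field_simp
        ring
      have h9 : ‖p‖^3 ≤ (r₀*(1/2:ℝ)^k)^3 :=
        pow_le_pow_left₀ (norm_nonneg p) (le_of_lt h2) 3
      have h10 : ((1/2:ℝ)^k)^3 * (8:ℝ)^k = 1 := by
        rw [← pow_mul, show k*3 = 3*k by ring, pow_mul, ← mul_pow]
        norm_num
      have h11 : (8:ℝ)^k * ‖p‖^3 ≤ r₀^3 := by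
        calc (8:ℝ)^k * ‖p‖^3 ≤ (8:ℝ)^k * (r₀*(1/2:ℝ)^k)^3 := by
              exact mul_le_mul_of_nonneg_left h9 (le_of_lt hp8)
          _ = r₀^3 := by
              rw [mul_pow]
              linear_combination r₀^3 * h10
      have h8 : c^2/(8*r₀^3)*(8:ℝ)^k ≤ c^2/(8*‖p‖^3) := by
        rw [div_mul_eq_mul_div, div_le_div_iff₀ (by positivity) (by positivity)]
        nlinarith [sq_nonneg c]
      calc c^2/(8*r₀^3)*(8:ℝ)^k ≤ c^2/(8*‖p‖^3) := h8
        _ = (c/(2*‖p‖))^2/(2*‖p‖) := h7.symm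
        _ ≤ ‖transProjC p (Krad x p)‖^2/(2*‖p‖) := by gcongr
    have harith : c^2/(8*r₀^3)*(8:ℝ)^k*((1/8:ℝ))^k = c^2/(8*r₀^3) := by
      rw [mul_assoc, ← mul_pow]
      norm_num
    calc ENNReal.ofReal (c^2/(8*r₀^3)) * volume S0
        = ENNReal.ofReal (c^2/(8*r₀^3)*(8:ℝ)^k) * volume (Sk k) := by
          rw [hSkvol k, ← mul_assoc, ← ENNReal.ofReal_mul (by positivity), harith]
      _ = ∫⁻ _p in Sk k, ENNReal.ofReal (c^2/(8*r₀^3)*(8:ℝ)^k) := by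
          rw [setLIntegral_const]
      _ ≤ ∫⁻ p in Sk k, f p := by
          refine lintegral_mono_ae ?_
          filter_upwards [ae_restrict_mem (hSkmeas k)] with p hp
          exact hlow p hp
  have hδ0 : ENNReal.ofReal (c^2/(8*r₀^3)) * volume S0 ≠ 0 := by
    apply mul_ne_zero
    · exact ne_of_gt (ENNReal.ofReal_pos.mpr (by positivity))
    · exact ne_of_gt hS0pos
  have hsum : (⊤:ENNReal) ≤ ∫⁻ p in ⋃ k, Sk k, f p := by
    rw [lintegral_iUnion hSkmeas hSkdisj]
    calc (⊤:ENNReal) = ∑' (_k : ℕ), ENNReal.ofReal (c^2/(8*r₀^3)) * volume S0 :=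
          (ENNReal.tsum_const_eq_top_of_ne_zero hδ0).symm
      _ ≤ ∑' k, ∫⁻ p in Sk k, f p := ENNReal.tsum_le_tsum hbound
  exact top_le_iff.mp (le_trans hsum (setLIntegral_le_lintegral _ _))
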